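/- For all integers n ≥ 1 and d ≥ 1, there exists a real number λ > 0 such that the polynomial λ·(t₁^{2d} + t₂^{2d} + ⋯ + tₙ^{2d}) − (t₁ + t₂ + ⋯ + tₙ)^{2d} is a sum of squares of polynomials in ℝ[t₁,…,tₙ]. -/

import Mathlib

open MvPolynomial

/-- A polynomial is a sum of squares. -/
def IsSOS {n : ℕ} (p : MvPolynomial (Fin n) ℝ) : Prop :=
  ∃ (m : ℕ) (q : Fin m → MvPolynomial (Fin n) ℝ), p = ∑ i, q i ^ 2

namespace SOSAux

variable {n : ℕ}

lemma isSOS_of_isSumSq {p : MvPolynomial (Fin n) ℝ} (h : IsSumSq p) : IsSOS p := by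
  induction h with
  | zero => exact ⟨0, fun _ => 0, by simp⟩
  | @sq_add a S _ ih =>
    obtain ⟨m, q, hq⟩ := ih
    exact ⟨m + 1, Fin.cons a q, by
      rw [Fin.sum_univ_succ, Fin.cons_zero, hq, sq]
      simp [Fin.cons_succ]⟩

lemma isSumSq_of_isSOS {p : MvPolynomial (Fin n) ℝ} (h : IsSOS p) : IsSumSq p := by
  obtain ⟨m, q, rfl⟩ := h
  simpa [sq] using isSumSq_sum_mul_self Finset.univ q

lemma sos_zero : IsSOS (0 : MvPolynomial (Fin n) ℝ) :=
  isSOS_of_isSumSq IsSumSq.zero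

lemma sos_sq (p : MvPolynomial (Fin n) ℝ) : IsSOS (p ^ 2) :=
  ⟨1, fun _ => p, by simp⟩

lemma sos_add {p q : MvPolynomial (Fin n) ℝ} (hp : IsSOS p) (hq : IsSOS q) :
    IsSOS (p + q) :=
  isSOS_of_isSumSq ((isSumSq_of_isSOS hp).add (isSumSq_of_isSOS hq))

lemma sos_sq_mul {q : MvPolynomial (Fin n) ℝ} (a : MvPolynomial (Fin n) ℝ)
    (hq : IsSOS q) : IsSOS (a ^ 2 * q) := by
  have h := isSumSq_of_isSOS hq
  clear hq
  induction h with
  | zero => simpa using sos_zero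
  | @sq_add b S _ ih =>
    have : a ^ 2 * (b * b + S) = (a * b) ^ 2 + a ^ 2 * S := by ring
    rw [this]
    exact sos_add (sos_sq _) ih

lemma sos_mul {p q : MvPolynomial (Fin n) ℝ} (hp : IsSOS p) (hq : IsSOS q) :
    IsSOS (p * q) := by
  have h := isSumSq_of_isSOS hp
  clear hp
  induction h with
  | zero => simpa using sos_zero
  | @sq_add a S _ ih =>
    have : (a * a + S) * q = a ^ 2 * q + S * q := by ring
    rw [this]
    exact sos_add (sos_sq_mul a hq) ih

lemma sos_const {c : ℝ} (hc : 0 ≤ c) : IsSOS (C c : MvPolynomial (Fin n) ℝ) := by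
  have : (C c : MvPolynomial (Fin n) ℝ) = (C (Real.sqrt c)) ^ 2 := by
    rw [← C_pow, sq, Real.mul_self_sqrt hc]
  rw [this]; exact sos_sq _

lemma sos_smul {c : ℝ} (hc : 0 ≤ c) {p : MvPolynomial (Fin n) ℝ} (hp : IsSOS p) :
    IsSOS (C c * p) :=
  sos_mul (sos_const hc) hp

lemma sos_unsmul {c : ℝ} (hc : 0 < c) {p : MvPolynomial (Fin n) ℝ}
    (hp : IsSOS (C c * p)) : IsSOS p := by
  have : p = C c⁻¹ * (C c * p) := by
    rw [← mul_assoc, ← C_mul, inv_mul_cancel₀ hc.ne', C_1, one_mul]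
  rw [this]
  exact sos_smul (by positivity) hp

lemma sos_sum {ι : Type*} (s : Finset ι) (f : ι → MvPolynomial (Fin n) ℝ)
    (h : ∀ i ∈ s, IsSOS (f i)) : IsSOS (∑ i ∈ s, f i) := by
  induction s using Finset.cons_induction with
  | empty => simpa using sos_zero
  | cons i s his ih =>
    rw [Finset.sum_cons]
    exact sos_add (h i (Finset.mem_cons_self i s)) (ih fun j hj => h j (Finset.mem_cons_of_mem hj))

/-- Key AM-GM style lemma: `p^(2k+2) + q^(2k+2) - p^(2k) * q^2` is a sum of squares. -/
lemma key (k : ℕ) (p q : MvPolynomial (Fin n) ℝ) :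
    IsSOS (p ^ (2 * k + 2) + q ^ (2 * k + 2) - p ^ (2 * k) * q ^ 2) := by
  induction k with
  | zero =>
    have h : p ^ (2 * 0 + 2) + q ^ (2 * 0 + 2) - p ^ (2 * 0) * q ^ 2 = p ^ 2 := by ring
    rw [h]; exact sos_sq p
  | succ k ih =>
    have h : p ^ (2 * (k + 1) + 2) + q ^ (2 * (k + 1) + 2) - p ^ (2 * (k + 1)) * q ^ 2
        = (p ^ (k + 2) - p ^ k * q ^ 2) ^ 2
          + q ^ 2 * (p ^ (2 * k + 2) + q ^ (2 * k + 2) - p ^ (2 * k) * q ^ 2) := by ring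
    rw [h]
    exact sos_add (sos_sq _) (sos_sq_mul _ ih)

/-- Base case: `n·(∑ tᵢ²) - (∑ tᵢ)²` is a sum of squares. -/
lemma base : IsSOS (C (n : ℝ) * (∑ i : Fin n, X i ^ 2) - (∑ i : Fin n, X i) ^ 2) := by
  apply sos_unsmul (c := 2) (by norm_num)
  have h : C (2 : ℝ) * (C (n : ℝ) * (∑ i : Fin n, X i ^ 2) - (∑ i : Fin n, X i) ^ 2)
      = ∑ i : Fin n, ∑ j : Fin n, (X i - X j : MvPolynomial (Fin n) ℝ) ^ 2 := by
    have expand : ∀ i j : Fin n, (X i - X j : MvPolynomial (Fin n) ℝ) ^ 2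
        = X i ^ 2 + X j ^ 2 - 2 * (X i * X j) := fun i j => by ring
    simp_rw [expand, Finset.sum_sub_distrib, Finset.sum_add_distrib, Finset.sum_const,
      Finset.card_univ, Fintype.card_fin, nsmul_eq_mul, ← Finset.mul_sum, ← Finset.sum_mul]
    simp only [map_natCast, map_ofNat]
    ring
  rw [h]
  exact sos_sum _ _ fun i _ => sos_sum _ _ fun j _ => sos_sq _

lemma main (hn : 1 ≤ n) (d : ℕ) : ∃ lam : ℝ, 0 < lam ∧
    IsSOS (C lam * (∑ i : Fin n, X i ^ (2 * d)) - (∑ i : Fin n, X i) ^ (2 * d)) := by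
  induction d with
  | zero =>
    refine ⟨1, one_pos, ?_⟩
    have h : C (1 : ℝ) * (∑ i : Fin n, X i ^ (2 * 0)) - (∑ i : Fin n, X i) ^ (2 * 0)
        = C ((n : ℝ) - 1) := by
      simp [Finset.card_univ, map_sub, map_natCast]
    rw [h]
    exact sos_const (by simp; exact_mod_cast hn)
  | succ d ih =>
    obtain ⟨lam, hlam, hS⟩ := ih
    have hn' : (0 : ℝ) < n := by exact_mod_cast hn
    refine ⟨lam * n * (2 * n), by positivity, ?_⟩
    set s : MvPolynomial (Fin n) ℝ := ∑ i : Fin n, X i with hs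
    set A : MvPolynomial (Fin n) ℝ := ∑ i : Fin n, X i ^ (2 * d) with hA
    set A' : MvPolynomial (Fin n) ℝ := ∑ i : Fin n, X i ^ (2 * d + 2) with hA'
    set B : MvPolynomial (Fin n) ℝ := ∑ i : Fin n, X i ^ 2 with hB
    set K : MvPolynomial (Fin n) ℝ :=
      ∑ i : Fin n, ∑ j : Fin n,
        (X i ^ (2 * d + 2) + X j ^ (2 * d + 2) - X i ^ (2 * d) * X j ^ 2) with hK
    have hKsos : IsSOS K := sos_sum _ _ fun i _ => sos_sum _ _ fun j _ => key d (X i) (X j)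
    have hKval : K = (n : MvPolynomial (Fin n) ℝ) * A' + (n : MvPolynomial (Fin n) ℝ) * A'
        - A * B := by
      simp_rw [hK, Finset.sum_sub_distrib, Finset.sum_add_distrib, Finset.sum_const,
        Finset.card_univ, Fintype.card_fin, nsmul_eq_mul, ← Finset.mul_sum, ← Finset.sum_mul]
      rfl
    have hT : IsSOS (C (n : ℝ) * B - s ^ 2) := base
    have hAsos : IsSOS A := sos_sum _ _ fun i _ => by
      have : (X i : MvPolynomial (Fin n) ℝ) ^ (2 * d) = (X i ^ d) ^ 2 := by
        rw [pow_mul']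
      rw [this]; exact sos_sq _
    have hfinal : C (lam * n * (2 * n)) * (∑ i : Fin n, X i ^ (2 * (d + 1)))
        - s ^ (2 * (d + 1))
        = C (lam * n) * K + (C lam * A) * (C (n : ℝ) * B - s ^ 2)
          + s ^ 2 * (C lam * A - s ^ (2 * d)) := by
      have e1 : (∑ i : Fin n, X i ^ (2 * (d + 1))) = A' := by
        rw [hA', show 2 * (d + 1) = 2 * d + 2 from by ring]
      have e2 : s ^ (2 * (d + 1)) = s ^ (2 * d) * s ^ 2 := by
        rw [show 2 * (d + 1) = 2 * d + 2 from by ring, pow_add]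
      rw [e1, e2, hKval]
      simp only [C_mul, map_natCast, map_ofNat]
      ring
    rw [hfinal]
    exact sos_add (sos_add (sos_smul (by positivity) hKsos)
        (sos_mul (sos_smul hlam.le hAsos) hT))
      (sos_sq_mul s hS)

end SOSAux

theorem exists_lambda_sos_dominating_power_of_sum
    {n d : ℕ} (hn : 1 ≤ n) (hd : 1 ≤ d) :
    ∃ lam : ℝ, 0 < lam ∧
      IsSOS (C lam * (∑ i : Fin n, X i ^ (2 * d)) - (∑ i : Fin n, X i) ^ (2 * d)) := by
  exact SOSAux.main hn d
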